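/- Each of the three formulas T(x), F(x), N(x) is an extensional 1-isolator for S5[Con], and every extensional 1-isolator for S5[Con] is S5[Con]-equivalent to exactly one of these three formulas. -/

import Mathlib

namespace KripkeModal

/-- Formulas of the modal language `L_□`: atoms `T(x)`, `F(x)` for variables
`x : ℕ`, negation, conjunction, and box. -/
inductive Fml : Type
  | tt : ℕ → Fml   -- T(x)
  | ff : ℕ → Fml   -- F(x)
  | neg : Fml → Fml
  | and : Fml → Fml → Fml
  | box : Fml → Fml
deriving DecidableEq

namespace Fml

/-- Material implication, defined from `¬, ∧`. -/
def imp (φ ψ : Fml) : Fml := neg (and φ (neg ψ))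

/-- Disjunction, defined from `¬, ∧`. -/
def or (φ ψ : Fml) : Fml := neg (and (neg φ) (neg ψ))

/-- Biconditional. -/
def iff (φ ψ : Fml) : Fml := and (imp φ ψ) (imp ψ φ)

/-- Diamond: `◇φ := ¬□¬φ`. -/
def dia (φ : Fml) : Fml := neg (box (neg φ))

/-- `N(x) := ¬T(x) ∧ ¬F(x)`. -/
def Nf (x : ℕ) : Fml := and (neg (tt x)) (neg (ff x))

/-- A fixed contradiction. -/
def bot : Fml := and (tt 0) (neg (tt 0))

end Fml

open Fml

/-- Evaluate a formula propositionally under a valuation `v` of the "atoms":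
the atomic formulas `T(x)`, `F(x)` and all boxed formulas are treated as
propositional atoms. -/
def evalProp (v : Fml → Bool) : Fml → Bool
  | Fml.neg φ => !(evalProp v φ)
  | Fml.and φ ψ => evalProp v φ && evalProp v ψ
  | φ => v φ

/-- A formula is a substitution instance of a classical propositional tautology
iff it evaluates to true under every propositional valuation of its atoms. -/
def Tautology (φ : Fml) : Prop := ∀ v : Fml → Bool, evalProp v φ = true

/-- Provability in the modal system `S5[Ax]`: the smallest set of formulas
containing all substitution instances of propositional tautologies, all
instances of K, T and 5, all formulas in `Ax`, closed under modus ponens and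
necessitation.  Taking `Ax = ∅` gives `S5` itself. -/
inductive Prv (Ax : Set Fml) : Fml → Prop
  | taut {φ} : Tautology φ → Prv Ax φ
  | axK (A B : Fml) : Prv Ax (imp (box (imp A B)) (imp (box A) (box B)))
  | axT (A : Fml) : Prv Ax (imp (box A) A)
  | ax5 (A : Fml) : Prv Ax (imp (dia A) (box (dia A)))
  | axm {φ} : φ ∈ Ax → Prv Ax φ
  | mp {A B} : Prv Ax (imp A B) → Prv Ax A → Prv Ax B
  | nec {A} : Prv Ax A → Prv Ax (box A)

/-- A system is consistent if it does not prove a contradiction. -/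
def Consistent (Ax : Set Fml) : Prop := ¬ Prv Ax Fml.bot

/-- The axiom schema `Con`: `¬(T(x) ∧ F(x))`. -/
def ConAx : Set Fml := { φ | ∃ x : ℕ, φ = neg (and (tt x) (ff x)) }

/-- The axiom schema `Ground`: `(◇T(x) ∧ ◇F(x)) → ◇N(x)`. -/
def GroundAx : Set Fml :=
  { φ | ∃ x : ℕ, φ = imp (and (dia (tt x)) (dia (ff x))) (dia (Nf x)) }

/-- Conjunction of a list of formulas (empty conjunction is `¬⊥`). -/
def bigAnd : List Fml → Fml
  | [] => Fml.neg Fml.bot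
  | [φ] => φ
  | φ :: ψ :: rest => Fml.and φ (bigAnd (ψ :: rest))

/-- Disjunction of a list of formulas (the empty disjunction is the fixed
contradiction `⊥`). -/
def bigOr : List Fml → Fml
  | [] => Fml.bot
  | [φ] => φ
  | φ :: ψ :: rest => Fml.or φ (bigOr (ψ :: rest))

/-- The axiom schema `Min_n`: all instances
`(◇N(x_1) ∧ … ∧ ◇N(x_n)) → ◇(N(x_1) ∧ … ∧ N(x_n))` obtained by substituting
arbitrary (not necessarily distinct) variables for `x_1, …, x_n`. -/
def MinAx (n : ℕ) : Set Fml :=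
  { φ | ∃ l : List ℕ, l.length = n ∧
      φ = imp (bigAnd (l.map (fun x => dia (Nf x)))) (dia (bigAnd (l.map Nf))) }

/-- A formula is extensional if it contains no `□`. -/
def Extensional : Fml → Prop
  | tt _ => True
  | ff _ => True
  | Fml.neg φ => Extensional φ
  | Fml.and φ ψ => Extensional φ ∧ Extensional ψ
  | box _ => False

/-- A formula is intensional if every atomic subformula occurs within the
scope of a `□`. -/
def Intensional : Fml → Prop
  | tt _ => False
  | ff _ => False
  | Fml.neg φ => Intensional φ
  | Fml.and φ ψ => Intensional φ ∧ Intensional ψ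
  | box _ => True

/-- The set of variables occurring in a formula. -/
def vars : Fml → Set ℕ
  | tt x => {x}
  | ff x => {x}
  | Fml.neg φ => vars φ
  | Fml.and φ ψ => vars φ ∪ vars ψ
  | box φ => vars φ

/-- An `n`-formula: one whose atoms use only the variables `x_1, …, x_n`. -/
def IsNFormula (n : ℕ) (φ : Fml) : Prop := vars φ ⊆ {x | 1 ≤ x ∧ x ≤ n}

/-- A 1-formula: one whose atoms use only the single variable `x_1`. -/
abbrev Is1Formula (φ : Fml) : Prop := IsNFormula 1 φ

/-- `φ` is `Γ`-maximal for the system `S5[Ax]`. -/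
def GammaMaximal (Ax : Set Fml) (Γ : Set Fml) (φ : Fml) : Prop :=
  Consistent (Ax ∪ {φ}) ∧ φ ∈ Γ ∧
    ∀ ψ ∈ Γ, Prv Ax (imp φ ψ) ∨ Prv Ax (imp φ (neg ψ))

/-- Extensional `n`-isolators for `S5[Ax]`. -/
def ExtIsolator (n : ℕ) (Ax : Set Fml) (φ : Fml) : Prop :=
  GammaMaximal Ax {ψ | Extensional ψ ∧ IsNFormula n ψ} φ

/-- Intensional `n`-isolators for `S5[Ax]`. -/
def IntIsolator (n : ℕ) (Ax : Set Fml) (φ : Fml) : Prop :=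
  GammaMaximal Ax {ψ | Intensional ψ ∧ IsNFormula n ψ} φ

/-- An `n`-isolator for `S5[Ax]`: a consistent conjunction `ε ∧ ι` of an
extensional `n`-isolator and an intensional `n`-isolator. -/
def Isolator (n : ℕ) (Ax : Set Fml) (φ : Fml) : Prop :=
  ∃ ε ι, ExtIsolator n Ax ε ∧ IntIsolator n Ax ι ∧
    φ = Fml.and ε ι ∧ Consistent (Ax ∪ {φ})

/-- Satisfaction in a model `(W, V)` (with `V = (V1, V2)`) at a world `w`. -/
def Sat {W : Type*} (V1 V2 : ℕ → Set W) : W → Fml → Prop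
  | w, tt x => w ∈ V1 x
  | w, ff x => w ∈ V2 x
  | w, Fml.neg φ => ¬ Sat V1 V2 w φ
  | w, Fml.and φ ψ => Sat V1 V2 w φ ∧ Sat V1 V2 w ψ
  | _, box φ => ∀ v, Sat V1 V2 v φ

/-- The variable assignment satisfies the `Con` constraint. -/
def ConC {W : Type*} (V1 V2 : ℕ → Set W) : Prop := ∀ x, V1 x ∩ V2 x = ∅

/-- The variable assignment satisfies the `Ground` constraint. -/
def GroundC {W : Type*} (V1 V2 : ℕ → Set W) : Prop :=
  ∀ x, (V1 x).Nonempty → (V2 x).Nonempty → ((V1 x ∪ V2 x)ᶜ : Set W).Nonempty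

/-- The variable assignment satisfies the `Min` constraint. -/
def MinC {W : Type*} (V1 V2 : ℕ → Set W) : Prop :=
  ∀ l : List ℕ, l ≠ [] → (∀ x ∈ l, ((V1 x ∪ V2 x)ᶜ : Set W).Nonempty) →
    (⋂ x ∈ l, ((V1 x ∪ V2 x)ᶜ : Set W)).Nonempty

/-- The prime conditions for a subset `S` of the tensor `[3]^n`, realized as
`Fin n → Fin 3` where the value `0` stands for the layer `T`, `1` for `F`,
and `2` for `N` (i.e. `1, 2, 3` in the paper's numbering). -/
def PrimeConditions (n : ℕ) (S : Set (Fin n → Fin 3)) : Prop :=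
  S.Nonempty ∧
  (∀ j : Fin n, (S ∩ {a | a j = 0}).Nonempty → (S ∩ {a | a j = 1}).Nonempty →
      (S ∩ {a | a j = 2}).Nonempty) ∧
  ∀ J : Set (Fin n), J.Nonempty →
    (∀ j ∈ J, (S ∩ {a | a j = 2}).Nonempty) →
    (S ∩ ⋂ j ∈ J, {a | a j = 2}).Nonempty

/-- `χ_1 = T`, `χ_2 = F`, `χ_3 = N` (with `Fin 3` values `0, 1, 2`). -/
def chi (k : Fin 3) (x : ℕ) : Fml :=
  if k = 0 then tt x else if k = 1 then ff x else Nf x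

/-- The extensional `n`-isolator `φ_a = χ_{a_1}(x_1) ∧ … ∧ χ_{a_n}(x_n)`
associated with a tuple `a ∈ [3]^n`. -/
def tupleFml {n : ℕ} (a : Fin n → Fin 3) : Fml :=
  bigAnd ((List.finRange n).map (fun i => chi (a i) (i.1 + 1)))

open Classical in
/-- The pre-`n`-isolator of `S ⊆ [3]^n`:
`⋀_{a ∈ S} ◇φ_a ∧ ⋀_{a ∉ S} ¬◇φ_a`. -/
noncomputable def preIsolator (n : ℕ) (S : Set (Fin n → Fin 3)) : Fml :=
  bigAnd (((Finset.univ : Finset (Fin n → Fin 3)).toList).map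
    (fun a => if a ∈ S then dia (tupleFml a) else Fml.neg (dia (tupleFml a))))


/-! ### Auxiliary development -/

section Aux

open Classical

@[simp] lemma evalProp_neg (v : Fml → Bool) (φ : Fml) :
    evalProp v (Fml.neg φ) = !evalProp v φ := rfl
@[simp] lemma evalProp_and (v : Fml → Bool) (φ ψ : Fml) :
    evalProp v (Fml.and φ ψ) = (evalProp v φ && evalProp v ψ) := rfl
@[simp] lemma evalProp_tt (v : Fml → Bool) (x : ℕ) : evalProp v (tt x) = v (tt x) := rfl
@[simp] lemma evalProp_ff (v : Fml → Bool) (x : ℕ) : evalProp v (ff x) = v (ff x) := rfl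
@[simp] lemma evalProp_box (v : Fml → Bool) (φ : Fml) : evalProp v (box φ) = v (box φ) := rfl

@[simp] lemma sat_neg {W : Type*} (V1 V2 : ℕ → Set W) (w : W) (φ : Fml) :
    Sat V1 V2 w (Fml.neg φ) ↔ ¬ Sat V1 V2 w φ := Iff.rfl
@[simp] lemma sat_and {W : Type*} (V1 V2 : ℕ → Set W) (w : W) (φ ψ : Fml) :
    Sat V1 V2 w (Fml.and φ ψ) ↔ Sat V1 V2 w φ ∧ Sat V1 V2 w ψ := Iff.rfl
@[simp] lemma sat_tt {W : Type*} (V1 V2 : ℕ → Set W) (w : W) (x : ℕ) :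
    Sat V1 V2 w (tt x) ↔ w ∈ V1 x := Iff.rfl
@[simp] lemma sat_ff {W : Type*} (V1 V2 : ℕ → Set W) (w : W) (x : ℕ) :
    Sat V1 V2 w (ff x) ↔ w ∈ V2 x := Iff.rfl
@[simp] lemma sat_box {W : Type*} (V1 V2 : ℕ → Set W) (w : W) (φ : Fml) :
    Sat V1 V2 w (box φ) ↔ ∀ v, Sat V1 V2 v φ := Iff.rfl
@[simp] lemma sat_imp {W : Type*} (V1 V2 : ℕ → Set W) (w : W) (φ ψ : Fml) :
    Sat V1 V2 w (imp φ ψ) ↔ (Sat V1 V2 w φ → Sat V1 V2 w ψ) := by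
  simp [Fml.imp]

lemma sat_evalProp {W : Type*} (V1 V2 : ℕ → Set W) (w : W) (φ : Fml) :
    Sat V1 V2 w φ ↔ evalProp (fun ψ => decide (Sat V1 V2 w ψ)) φ = true := by
  induction φ with
  | tt x => simp
  | ff x => simp
  | neg φ ih => simp [ih]
  | and φ ψ ih1 ih2 => simp [ih1, ih2]
  | box φ _ => simp

theorem sound {Ax : Set Fml} {φ : Fml} (h : Prv Ax φ) {W : Type*} (V1 V2 : ℕ → Set W)
    (hAx : ∀ ψ ∈ Ax, ∀ w, Sat V1 V2 w ψ) : ∀ w, Sat V1 V2 w φ := by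
  induction h with
  | taut ht => intro w; rw [sat_evalProp]; exact ht _
  | axK A B => intro w; simp; intro h1 h2 v; exact h1 v (h2 v)
  | axT A => intro w; simp; intro h1; exact h1 w
  | ax5 A => intro w; simp [Fml.dia]; intro v hv u; exact ⟨v, hv⟩
  | axm hmem => exact hAx _ hmem
  | mp _ _ ih1 ih2 => intro w; exact (sat_imp _ _ _ _ _).mp (ih1 w) (ih2 w)
  | nec _ ih => intro w; exact ih

lemma prv_mono {Ax Ax' : Set Fml} (h : Ax ⊆ Ax') {φ : Fml} (hp : Prv Ax φ) : Prv Ax' φ := by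
  induction hp with
  | taut t => exact Prv.taut t
  | axK A B => exact Prv.axK A B
  | axT A => exact Prv.axT A
  | ax5 A => exact Prv.ax5 A
  | axm hm => exact Prv.axm (h hm)
  | mp _ _ ih1 ih2 => exact ih1.mp ih2
  | nec _ ih => exact ih.nec

lemma prv_mp2 {Ax : Set Fml} {A B C : Fml} (t : Tautology (imp A (imp B C)))
    (hA : Prv Ax A) (hB : Prv Ax B) : Prv Ax C :=
  ((Prv.taut t).mp hA).mp hB

lemma eval_agree {ψ : Fml} (hext : Extensional ψ) (h1 : ∀ y ∈ vars ψ, y = 1)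
    {v v' : Fml → Bool} (ht : v (tt 1) = v' (tt 1)) (hf : v (ff 1) = v' (ff 1)) :
    evalProp v ψ = evalProp v' ψ := by
  induction ψ with
  | tt x => have hx : x = 1 := h1 x (by simp [vars]); subst hx; simpa using ht
  | ff x => have hx : x = 1 := h1 x (by simp [vars]); subst hx; simpa using hf
  | neg φ ih => simpa using congrArg Bool.not (ih hext h1)
  | and φ χ ih1 ih2 =>
      obtain ⟨e1, e2⟩ := hext
      have hv1 : ∀ y ∈ vars φ, y = 1 := fun y hy => h1 y (Or.inl hy)
      have hv2 : ∀ y ∈ vars χ, y = 1 := fun y hy => h1 y (Or.inr hy)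
      simp [ih1 e1 hv1, ih2 e2 hv2]
  | box φ _ => exact absurd hext (by simp [Extensional])

/-- The state valuation assigning `b1` to `T(x₁)` and `b2` to `F(x₁)`. -/
def stv (b1 b2 : Bool) : Fml → Bool :=
  fun ψ => if ψ = tt 1 then b1 else if ψ = ff 1 then b2 else false

@[simp] lemma stv_tt (b1 b2 : Bool) : stv b1 b2 (tt 1) = b1 := rfl
@[simp] lemma stv_ff (b1 b2 : Bool) : stv b1 b2 (ff 1) = b2 := rfl

lemma conAx_mem : Fml.neg (Fml.and (tt 1) (ff 1)) ∈ ConAx := ⟨1, rfl⟩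

/-- If `χ` pins down the truth values of `T(x₁), F(x₁)` (given `Con`) to a state
where `ψ` evaluates true, then `S5[Con] ⊢ χ → ψ`. -/
lemma prv_state {ψ : Fml} (hext : Extensional ψ) (h1 : ∀ y ∈ vars ψ, y = 1)
    (χ : Fml) (b1 b2 : Bool)
    (hχ : ∀ v : Fml → Bool, (v (tt 1) && v (ff 1)) = false → evalProp v χ = true →
      v (tt 1) = b1 ∧ v (ff 1) = b2)
    (he : evalProp (stv b1 b2) ψ = true) :
    Prv ConAx (imp χ ψ) := by
  refine Prv.mp (Prv.taut ?_) (Prv.axm conAx_mem)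
  intro v
  simp only [Fml.imp, evalProp_neg, evalProp_and, evalProp_tt, evalProp_ff]
  by_cases hcon : (v (tt 1) && v (ff 1)) = true
  · simp [hcon]
  · have hc' : (v (tt 1) && v (ff 1)) = false := by simpa using hcon
    by_cases hχv : evalProp v χ = true
    · obtain ⟨hb1, hb2⟩ := hχ v hc' hχv
      have hag : evalProp v ψ = evalProp (stv b1 b2) ψ :=
        eval_agree hext h1 (by simp [hb1]) (by simp [hb2])
      simp [hc', hχv, hag, he]
    · have : evalProp v χ = false := by simpa using hχv
      simp [hc', this]

lemma prv_neg_of_false {φ : Fml} (hext : Extensional φ) (h1 : ∀ y ∈ vars φ, y = 1)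
    (hT : evalProp (stv true false) φ = false)
    (hF : evalProp (stv false true) φ = false)
    (hN : evalProp (stv false false) φ = false) :
    Prv ConAx (Fml.neg φ) := by
  refine Prv.mp (Prv.taut ?_) (Prv.axm conAx_mem)
  intro v
  simp only [Fml.imp, evalProp_neg, evalProp_and, evalProp_tt, evalProp_ff]
  by_cases hcon : (v (tt 1) && v (ff 1)) = true
  · simp [hcon]
  · have hc' : (v (tt 1) && v (ff 1)) = false := by simpa using hcon
    have key : evalProp v φ = false := by
      cases htv : v (tt 1) <;> cases hfv : v (ff 1)
      · rw [eval_agree hext h1 (v' := stv false false) (by simp [htv]) (by simp [hfv])]; exact hN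
      · rw [eval_agree hext h1 (v' := stv false true) (by simp [htv]) (by simp [hfv])]; exact hF
      · rw [eval_agree hext h1 (v' := stv true false) (by simp [htv]) (by simp [hfv])]; exact hT
      · rw [htv, hfv] at hc'; simp at hc'
    simp [hc', key]

/-- Refuting provability by a countermodel. -/
lemma sound_not {Ax : Set Fml} {φ : Fml} {W : Type} (V1 V2 : ℕ → Set W)
    (hAx : ∀ ψ ∈ Ax, ∀ w, Sat V1 V2 w ψ) (w : W) (hφ : ¬ Sat V1 V2 w φ) :
    ¬ Prv Ax φ := fun h => hφ (sound h V1 V2 hAx w)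

/-- The three one-world models, for the states T, F, N. -/
def MV : Fin 3 → ((ℕ → Set Unit) × (ℕ → Set Unit))
  | 0 => (fun _ => Set.univ, fun _ => ∅)
  | 1 => (fun _ => ∅, fun _ => Set.univ)
  | 2 => (fun _ => ∅, fun _ => ∅)

lemma MV_con (s : Fin 3) : ∀ ψ ∈ ConAx, ∀ w, Sat (MV s).1 (MV s).2 w ψ := by
  rintro ψ ⟨x, rfl⟩ w
  fin_cases s <;> simp [MV]

def chiL : Fin 3 → Fml
  | 0 => tt 1
  | 1 => ff 1
  | 2 => Nf 1

lemma MV_sat (s t : Fin 3) : Sat (MV t).1 (MV t).2 () (chiL s) ↔ s = t := by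
  fin_cases s <;> fin_cases t <;> simp [MV, chiL, Nf]

lemma MV_conunion (s : Fin 3) :
    ∀ ψ ∈ ConAx ∪ {chiL s}, ∀ w, Sat (MV s).1 (MV s).2 w ψ := by
  rintro ψ (hψ | rfl) w
  · exact MV_con s ψ hψ w
  · exact (MV_sat s s).mpr rfl

lemma chiL_consistent (s : Fin 3) : Consistent (ConAx ∪ {chiL s}) := by
  refine sound_not (MV s).1 (MV s).2 (MV_conunion s) () ?_
  fin_cases s <;> simp [MV, Fml.bot]

lemma not_prv_neg_chiL (s : Fin 3) : ¬ Prv ConAx (Fml.neg (chiL s)) := by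
  refine sound_not (MV s).1 (MV s).2 (MV_con s) () ?_
  simp [MV_sat s s]

lemma not_prv_imp_chiL {s t : Fin 3} (h : s ≠ t) : ¬ Prv ConAx (imp (chiL s) (chiL t)) := by
  refine sound_not (MV s).1 (MV s).2 (MV_con s) () ?_
  simp [MV_sat s s, MV_sat t s]
  exact fun hh => h (hh.symm)

lemma chiL_ext (s : Fin 3) : Extensional (chiL s) := by
  fin_cases s <;> simp [chiL, Nf, Extensional]

lemma chiL_vars (s : Fin 3) : ∀ y ∈ vars (chiL s), y = 1 := by
  fin_cases s <;> intro y hy <;> simp [chiL, Nf, vars] at hy <;> tauto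

lemma chiL_isN (s : Fin 3) : IsNFormula 1 (chiL s) := by
  intro y hy
  have := chiL_vars s y hy
  subst this; exact ⟨le_refl 1, le_refl 1⟩

/-- The state pinning property of each `χ_s`. -/
def stb : Fin 3 → Bool × Bool
  | 0 => (true, false)
  | 1 => (false, true)
  | 2 => (false, false)

lemma chiL_pins (s : Fin 3) : ∀ v : Fml → Bool, (v (tt 1) && v (ff 1)) = false →
    evalProp v (chiL s) = true → v (tt 1) = (stb s).1 ∧ v (ff 1) = (stb s).2 := by
  intro v hc hv
  fin_cases s <;> simp [chiL, Nf, stb] at hv ⊢ <;>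
    cases htv : v (tt 1) <;> cases hfv : v (ff 1) <;> simp_all

lemma prv_state_chiL {ψ : Fml} (hext : Extensional ψ) (h1 : ∀ y ∈ vars ψ, y = 1)
    (s : Fin 3) (he : evalProp (stv (stb s).1 (stb s).2) ψ = true) :
    Prv ConAx (imp (chiL s) ψ) :=
  prv_state hext h1 (chiL s) (stb s).1 (stb s).2 (chiL_pins s) he

lemma isN_vars {ψ : Fml} (h : IsNFormula 1 ψ) : ∀ y ∈ vars ψ, y = 1 := by
  intro y hy
  have := h hy
  simp only [Set.mem_setOf_eq] at this
  omega

end Aux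

section Derived

lemma prv_iff_intro {Ax : Set Fml} {A B : Fml} (h1 : Prv Ax (imp A B))
    (h2 : Prv Ax (imp B A)) : Prv Ax (Fml.iff A B) := by
  refine prv_mp2 ?_ h1 h2
  intro v
  simp only [Fml.imp, Fml.iff, evalProp_neg, evalProp_and]
  cases evalProp v A <;> cases evalProp v B <;> rfl

lemma prv_neg_of_imps {Ax : Set Fml} {A B : Fml} (h1 : Prv Ax (imp A B))
    (h2 : Prv Ax (imp B (Fml.neg A))) : Prv Ax (Fml.neg A) := by
  refine prv_mp2 ?_ h1 h2
  intro v
  simp only [Fml.imp, evalProp_neg, evalProp_and]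
  cases evalProp v A <;> cases evalProp v B <;> rfl

lemma prv_imp_of_iffs {Ax : Set Fml} {φ A B : Fml} (h1 : Prv Ax (Fml.iff φ A))
    (h2 : Prv Ax (Fml.iff φ B)) : Prv Ax (imp A B) := by
  refine prv_mp2 ?_ h1 h2
  intro v
  simp only [Fml.imp, Fml.iff, evalProp_neg, evalProp_and]
  cases evalProp v φ <;> cases evalProp v A <;> cases evalProp v B <;> rfl

lemma prv_bot_of_neg {φ : Fml} (h : Prv ConAx (Fml.neg φ)) :
    Prv (ConAx ∪ {φ}) Fml.bot := by
  refine prv_mp2 ?_ (Prv.axm (Set.mem_union_right _ rfl))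
    (prv_mono Set.subset_union_left h)
  intro v
  simp only [Fml.imp, Fml.bot, evalProp_neg, evalProp_and, evalProp_tt]
  cases evalProp v φ <;> cases v (tt 0) <;> rfl

lemma equiv_chiL {φ : Fml} (hext : Extensional φ) (h1 : ∀ y ∈ vars φ, y = 1)
    (hmax : ∀ ψ ∈ {ψ : Fml | Extensional ψ ∧ IsNFormula 1 ψ},
      Prv ConAx (imp φ ψ) ∨ Prv ConAx (imp φ (Fml.neg ψ)))
    (s : Fin 3) (he : evalProp (stv (stb s).1 (stb s).2) φ = true) :
    Prv ConAx (Fml.iff φ (chiL s)) := by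
  have hsφ : Prv ConAx (imp (chiL s) φ) := prv_state_chiL hext h1 s he
  rcases hmax (chiL s) ⟨chiL_ext s, chiL_isN s⟩ with h | h
  · exact prv_iff_intro h hsφ
  · exact absurd (prv_neg_of_imps hsφ h) (not_prv_neg_chiL s)

lemma mem_list_chiL {ψ : Fml} (h : ψ ∈ [tt 1, ff 1, Nf 1]) : ∃ s : Fin 3, ψ = chiL s := by
  simp only [List.mem_cons, List.mem_singleton, List.not_mem_nil, or_false] at h
  rcases h with rfl | rfl | rfl
  exacts [⟨0, rfl⟩, ⟨1, rfl⟩, ⟨2, rfl⟩]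

lemma chiL_unique {φ : Fml} {s t : Fin 3} (h1 : Prv ConAx (Fml.iff φ (chiL s)))
    (h2 : Prv ConAx (Fml.iff φ (chiL t))) : s = t := by
  by_contra hne
  exact not_prv_imp_chiL hne (prv_imp_of_iffs h1 h2)

end Derived

/-- the extensional 1-isolators for S5[Con] are, up to
S5[Con]-equivalence, exactly `T(x)`, `F(x)`, `N(x)` (with `x` the variable
`x_1`). -/
theorem ext_isolators_for_S5Con :
    (∀ φ ∈ [tt 1, ff 1, Nf 1], ExtIsolator 1 ConAx φ) ∧
    (∀ φ : Fml, ExtIsolator 1 ConAx φ →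
      ∃! ψ, ψ ∈ [tt 1, ff 1, Nf 1] ∧ Prv ConAx (Fml.iff φ ψ)) := by
  constructor
  · intro φ hφ
    obtain ⟨s, rfl⟩ := mem_list_chiL hφ
    refine ⟨chiL_consistent s, ⟨chiL_ext s, chiL_isN s⟩, ?_⟩
    rintro ψ ⟨hψe, hψn⟩
    have h1' := isN_vars hψn
    by_cases he : evalProp (stv (stb s).1 (stb s).2) ψ = true
    · exact Or.inl (prv_state_chiL hψe h1' s he)
    · right
      apply prv_state_chiL (ψ := Fml.neg ψ) hψe h1' s
      simp only [evalProp_neg, Bool.not_eq_true'] at he ⊢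
      simpa using he
  · rintro φ ⟨hcons, ⟨hext, hN⟩, hmax⟩
    have h1' := isN_vars hN
    have hstate : ∃ s : Fin 3, evalProp (stv (stb s).1 (stb s).2) φ = true := by
      by_contra hno
      push_neg at hno
      have hneg := prv_neg_of_false hext h1'
        (by simpa [stb] using hno 0) (by simpa [stb] using hno 1) (by simpa [stb] using hno 2)
      exact hcons (prv_bot_of_neg hneg)
    obtain ⟨s, hs⟩ := hstate
    have hiff := equiv_chiL hext h1' hmax s hs
    refine ⟨chiL s, ⟨?_, hiff⟩, ?_⟩
    · fin_cases s <;> simp [chiL]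
    · rintro y ⟨hy, hyiff⟩
      obtain ⟨t, rfl⟩ := mem_list_chiL hy
      rw [chiL_unique hyiff hiff]

end KripkeModal
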